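/- Suppose G is connected and satisfies the curvature-dimension inequality CD(m,0), and f : V → ℝ is a nonconstant harmonic eigenfunction of the Laplacian with nontrivial eigenvalue λ > 0, i.e., −Δf(x) = λ f(x) for all x ∈ V. Then for every vertex x ∈ V, |∇f|²(x) ≤ (8 − 2/m) · λ · max_{z ∈ V} f²(z). -/
import Mathlib


open Finset

/-- The weighted degree `d(x) = Σ_y w(x,y)`. -/
noncomputable def deg {V : Type*} [Fintype V] (w : V → V → ℝ) (x : V) : ℝ :=
  ∑ y, w x y

/-- The graph Laplacian `Δf(x) = (1/d(x)) Σ_y w(x,y) (f(y) − f(x))`. -/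
noncomputable def lap {V : Type*} [Fintype V] (w : V → V → ℝ) (f : V → ℝ) (x : V) : ℝ :=
  (1 / deg w x) * ∑ y, w x y * (f y - f x)

/-- The bilinear operator `Γ(f,g)(x) = (1/2)(Δ(fg)(x) − f(x)Δg(x) − g(x)Δf(x))`. -/
noncomputable def gam {V : Type*} [Fintype V] (w : V → V → ℝ) (f g : V → ℝ) (x : V) : ℝ :=
  (1 / 2) * (lap w (fun y => f y * g y) x - f x * lap w g x - g x * lap w f x)

/-- The curvature operator `Γ₂(f,g)(x) = (1/2)(ΔΓ(f,g)(x) − Γ(f,Δg)(x) − Γ(g,Δf)(x))`. -/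
noncomputable def gam2 {V : Type*} [Fintype V] (w : V → V → ℝ) (f g : V → ℝ) (x : V) : ℝ :=
  (1 / 2) * (lap w (gam w f g) x - gam w f (lap w g) x - gam w g (lap w f) x)

/-- The gradient square `|∇f|²(x) = (1/d(x)) Σ_y w(x,y) (f(x) − f(y))²`. -/
noncomputable def gradsq {V : Type*} [Fintype V] (w : V → V → ℝ) (f : V → ℝ) (x : V) : ℝ :=
  (1 / deg w x) * ∑ y, w x y * (f x - f y) ^ 2

/-- The curvature-dimension inequality `CD(m,κ)`. -/
def CD {V : Type*} [Fintype V] (w : V → V → ℝ) (m κ : ℝ) : Prop :=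
  ∀ (f : V → ℝ) (x : V), gam2 w f f x ≥ (1 / m) * (lap w f x) ^ 2 + κ * gam w f f x

lemma lap_comb {V : Type*} [Fintype V] (w : V → V → ℝ) (c : ℝ) (g1 g2 : V → ℝ) (x : V) :
    lap w (fun y => g1 y + c * g2 y) x = lap w g1 x + c * lap w g2 x := by
  have h : ∑ y, w x y * ((g1 y + c * g2 y) - (g1 x + c * g2 x))
      = ∑ y, w x y * (g1 y - g1 x) + c * ∑ y, w x y * (g2 y - g2 x) := by
    rw [Finset.mul_sum, ← Finset.sum_add_distrib]
    exact Finset.sum_congr rfl fun y _ => by ring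
  simp only [lap]
  linear_combination (1 / deg w x) * h

lemma lap_smul {V : Type*} [Fintype V] (w : V → V → ℝ) (c : ℝ) (g : V → ℝ) (x : V) :
    lap w (fun y => c * g y) x = c * lap w g x := by
  have h : ∑ y, w x y * (c * g y - c * g x) = c * ∑ y, w x y * (g y - g x) := by
    rw [Finset.mul_sum]
    exact Finset.sum_congr rfl fun y _ => by ring
  simp only [lap]
  linear_combination (1 / deg w x) * h

lemma gam_self {V : Type*} [Fintype V] (w : V → V → ℝ) (f : V → ℝ) (y : V) :
    gam w f f y = 1/2 * gradsq w f y := by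
  have h : ∑ z, w y z * (f z * f z - f y * f y) - 2 * f y * ∑ z, w y z * (f z - f y)
      = ∑ z, w y z * (f y - f z) ^ 2 := by
    rw [Finset.mul_sum, ← Finset.sum_sub_distrib]
    exact Finset.sum_congr rfl fun z _ => by ring
  simp only [gam, lap, gradsq]
  linear_combination (1 / (2 * deg w y)) * h

lemma gradsq_nonneg {V : Type*} [Fintype V] (w : V → V → ℝ)
    (hnonneg : ∀ x y, 0 ≤ w x y) (hdeg : ∀ x, 0 < deg w x) (f : V → ℝ) (y : V) :
    0 ≤ gradsq w f y :=
  mul_nonneg (one_div_nonneg.mpr (hdeg y).le)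
    (Finset.sum_nonneg fun z _ => mul_nonneg (hnonneg y z) (sq_nonneg _))

theorem harnack_inequality_nonneg_curvature {V : Type*} [Fintype V] (w : V → V → ℝ)
    (hsymm : ∀ x y, w x y = w y x) (hnonneg : ∀ x y, 0 ≤ w x y)
    (hloop : ∀ x, w x x = 0) (hdeg : ∀ x, 0 < deg w x)
    (hconn : (SimpleGraph.fromRel fun x y => 0 < w x y).Connected)
    (m : ℝ) (hm : 0 < m) (hCD : CD w m 0)
    (lam : ℝ) (hlam : 0 < lam) (f : V → ℝ) (hf : ∀ x, -lap w f x = lam * f x)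
    (hnc : ∃ x y, f x ≠ f y) (x : V) :
    gradsq w f x ≤ (8 - 2 / m) * lam * ⨆ z, f z ^ 2 := by
  -- basic facts about the eigenfunction
  have hlapf : ∀ y, lap w f y = -lam * f y := fun y => by linear_combination -hf y
  -- Laplacian of f²
  have hlapff : ∀ y, lap w (fun z => f z * f z) y = -2 * lam * f y ^ 2 + gradsq w f y := by
    intro y
    have h1 := gam_self w f y
    have h2 := hlapf y
    have h3 : gam w f f y = (1/2) * (lap w (fun z => f z * f z) y
        - f y * lap w f y - f y * lap w f y) := rfl
    linear_combination (-2) * h3 + 2 * h1 + 2 * f y * h2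
  have hlapfsq : ∀ y, lap w (fun z => f z ^ 2) y = -2 * lam * f y ^ 2 + gradsq w f y := by
    intro y
    rw [show (fun z : V => f z ^ 2) = (fun z => f z * f z) from funext fun z => sq (f z)]
    exact hlapff y
  -- Γ(f, Δf) = -λ Γ(f,f)
  have hgamlap : ∀ y, gam w f (lap w f) y = -lam * gam w f f y := by
    intro y
    have hfun : lap w f = fun z => -lam * f z := funext hlapf
    rw [hfun]
    have e1 : (fun z => f z * (-lam * f z)) = (fun z : V => -lam * (f z * f z)) := by
      funext z; ring
    simp only [gam, e1, lap_smul]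
    ring
  -- key consequence of CD(m,0)
  have hCDkey : ∀ y, (1/m) * (lam ^ 2 * f y ^ 2)
      ≤ (1/4) * lap w (fun z => gradsq w f z) y + (lam / 2) * gradsq w f y := by
    intro y
    have h := hCD f y
    simp only [gam2] at h
    have e2 : lap w (gam w f f) y = (1/2) * lap w (fun z => gradsq w f z) y := by
      rw [show gam w f f = fun z => (1/2 : ℝ) * gradsq w f z from funext (gam_self w f),
        lap_smul]
    have e6 : (lap w f y) ^ 2 = lam ^ 2 * f y ^ 2 := by rw [hlapf y]; ring
    rw [e2, hgamlap y, e6, gam_self w f y] at h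
    linarith [h]
  -- maximum vertex of g = |∇f|² + 4λ f²
  obtain ⟨a, b, hab⟩ := hnc
  obtain ⟨v, -, hv⟩ := Finset.exists_max_image Finset.univ
    (fun y => gradsq w f y + (4 * lam) * f y ^ 2) ⟨a, Finset.mem_univ a⟩
  have hv' : ∀ y, gradsq w f y + (4 * lam) * f y ^ 2
      ≤ gradsq w f v + (4 * lam) * f v ^ 2 := fun y => hv y (Finset.mem_univ y)
  -- Δg(v) ≤ 0
  have hlapg : lap w (fun y => gradsq w f y + (4 * lam) * f y ^ 2) v ≤ 0 := by
    have hs : ∑ y, w v y * ((gradsq w f y + (4 * lam) * f y ^ 2)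
        - (gradsq w f v + (4 * lam) * f v ^ 2)) ≤ 0 :=
      Finset.sum_nonpos fun y _ =>
        mul_nonpos_of_nonneg_of_nonpos (hnonneg v y) (by linarith [hv' y])
    have hd : (0:ℝ) ≤ 1 / deg w v := one_div_nonneg.mpr (hdeg v).le
    exact mul_nonpos_of_nonneg_of_nonpos hd hs
  have hsplit : lap w (fun y => gradsq w f y + (4 * lam) * f y ^ 2) v
      = lap w (fun z => gradsq w f z) v + (4 * lam) * lap w (fun z => f z ^ 2) v :=
    lap_comb w (4 * lam) _ _ v
  have hkey : lam * gradsq w f v ≤ (4 - 2 * (1/m)) * (lam ^ 2 * f v ^ 2) := by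
    have h1 : lap w (fun z => gradsq w f z) v
        + (4 * lam) * (-2 * lam * f v ^ 2 + gradsq w f v) ≤ 0 := by
      rw [← hlapfsq v, ← hsplit]; exact hlapg
    have h2 := hCDkey v
    nlinarith [h1, h2]
  have hgradnn := gradsq_nonneg w hnonneg hdeg f
  by_cases h8 : 0 ≤ 8 - 2 / m
  · -- main case
    have h5 : gradsq w f v ≤ (4 - 2 / m) * lam * f v ^ 2 := by
      have h6 : lam * gradsq w f v ≤ lam * ((4 - 2 / m) * lam * f v ^ 2) := by
        have : (4 - 2 * (1/m)) * (lam ^ 2 * f v ^ 2)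
            = lam * ((4 - 2 / m) * lam * f v ^ 2) := by ring
        linarith [hkey, this.le, this.ge]
      exact le_of_mul_le_mul_left h6 hlam
    have hsup : f v ^ 2 ≤ ⨆ z, f z ^ 2 :=
      le_ciSup (f := fun z => f z ^ 2) (Set.Finite.bddAbove (Set.finite_range _)) v
    have hpos : 0 ≤ (8 - 2 / m) * lam := mul_nonneg h8 hlam.le
    have hmul : (8 - 2 / m) * lam * f v ^ 2 ≤ (8 - 2 / m) * lam * ⨆ z, f z ^ 2 :=
      mul_le_mul_of_nonneg_left hsup hpos
    have hx : gradsq w f x ≤ gradsq w f v + (4 * lam) * f v ^ 2 := by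
      have : 0 ≤ (4 * lam) * f x ^ 2 := by positivity
      linarith [hv' x]
    nlinarith [hx, h5, hmul]
  · -- degenerate case: forces f ≡ 0, contradicting nonconstancy
    exfalso
    push_neg at h8
    have hc : 4 - 2 * (1/m) < 0 := by
      have : (2:ℝ) / m = 2 * (1/m) := by ring
      linarith [this.le, this.ge]
    have hfv2 : f v ^ 2 ≤ 0 := by
      by_contra hpos
      push_neg at hpos
      have hA : 0 < lam ^ 2 * f v ^ 2 := mul_pos (by positivity) hpos
      have hB : (4 - 2 * (1/m)) * (lam ^ 2 * f v ^ 2) < 0 := mul_neg_of_neg_of_pos hc hA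
      linarith [hkey, mul_nonneg hlam.le (hgradnn v)]
    have hfv : f v = 0 := by
      have := sq_nonneg (f v)
      have : f v ^ 2 = 0 := le_antisymm hfv2 (sq_nonneg _)
      exact pow_eq_zero_iff (n := 2) (by norm_num) |>.mp this
    have hgv : gradsq w f v = 0 := by
      have h7 : lam * gradsq w f v ≤ 0 := by
        have : (4 - 2 * (1/m)) * (lam ^ 2 * f v ^ 2) = 0 := by rw [hfv]; ring
        linarith [hkey]
      nlinarith [hgradnn v, hlam]
    have hall : ∀ y, f y = 0 := by
      intro y
      have := hv' y
      rw [hfv, hgv] at this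
      have h9 : (4 * lam) * f y ^ 2 ≤ 0 := by linarith [hgradnn y]
      have h10 : f y ^ 2 = 0 := by nlinarith [sq_nonneg (f y)]
      exact pow_eq_zero_iff (n := 2) (by norm_num) |>.mp h10
    exact hab (by rw [hall a, hall b])
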